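/- arXiv:2601.15350 — 3 statements merged into one kernel-verified Lean document; each statement's English description precedes it below -/
import Mathlib

section
/- If b ≥ λ > 0 and 0 ≤ θ ≤ 1 with θ < 1, then all three eigenvalues -2b(1-θ), -2b - 3λ - bθ - √((bθ+λ)² + 8λ²), and -2b - 3λ - bθ + √((bθ+λ)² + 8λ²) of the matrix 2·[[-(b+λ), -(bθ+λ), λ],[-(bθ+λ), -(b+λ), λ],[λ, λ, -(b+λ)]] are negative; consequently the matrix is negative definite. -/
open Matrix Polynomial

/-- If `b ≥ λ > 0` and `0 ≤ θ < 1`, then the three eigenvalues of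
`2 • ![![-(b+λ),-(bθ+λ),λ],![-(bθ+λ),-(b+λ),λ],![λ,λ,-(b+λ)]]` are negative, and
consequently the matrix is negative definite (its negation is positive definite). -/
theorem stmt1 (b l θ : ℝ) (hbl : b ≥ l) (hl : 0 < l) (hθ0 : 0 ≤ θ) (hθ1 : θ < 1) :
    (-2 * b * (1 - θ) < 0) ∧
    (-2 * b - 3 * l - b * θ - Real.sqrt ((b * θ + l) ^ 2 + 8 * l ^ 2) < 0) ∧
    (-2 * b - 3 * l - b * θ + Real.sqrt ((b * θ + l) ^ 2 + 8 * l ^ 2) < 0) ∧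
    (-((2 : ℝ) • !![-(b + l), -(b * θ + l), l;
                    -(b * θ + l), -(b + l), l;
                    l, l, -(b + l)])).PosDef := by
  have hb : 0 < b := lt_of_lt_of_le hl hbl
  refine ⟨by nlinarith, ?_, ?_, ?_⟩
  · have h := Real.sqrt_nonneg ((b * θ + l) ^ 2 + 8 * l ^ 2)
    nlinarith
  · have hy : (0:ℝ) < 2 * b + 3 * l + b * θ := by nlinarith
    have h : Real.sqrt ((b * θ + l) ^ 2 + 8 * l ^ 2) < 2 * b + 3 * l + b * θ := by
      rw [show (2 * b + 3 * l + b * θ) = Real.sqrt ((2 * b + 3 * l + b * θ)^2) from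
        (Real.sqrt_sq hy.le).symm]
      apply Real.sqrt_lt_sqrt (by positivity)
      nlinarith [mul_pos hb hb, mul_pos hb hl, mul_nonneg (mul_nonneg hb.le hb.le) hθ0,
        mul_nonneg (mul_nonneg hb.le hl.le) hθ0]
    linarith
  · rw [Matrix.posDef_iff_dotProduct_mulVec]
    constructor
    · show _ᴴ = _
      ext i j
      fin_cases i <;> fin_cases j <;>
        simp [Matrix.conjTranspose, Matrix.transpose, Matrix.vecHead, Matrix.vecTail]
    · intro x hx
      have hex : x 0 ≠ 0 ∨ x 1 ≠ 0 ∨ x 2 ≠ 0 := by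
        by_contra h
        push_neg at h
        apply hx
        funext i
        fin_cases i <;> simp [h.1, h.2.1, h.2.2]
      have hpos : 0 < x 0 ^ 2 + x 1 ^ 2 + x 2 ^ 2 := by
        rcases hex with h | h | h
        · positivity
        · positivity
        · positivity
      simp [Matrix.mulVec, dotProduct, Fin.sum_univ_three, Matrix.vecHead,
        Matrix.vecTail]
      set X := x 0
      set Y := x 1
      set Z := x 2
      have hbl2 : 0 < b + l := by linarith
      have key : 0 < (b + l) * ((b+l)*(X^2+Y^2+Z^2) + 2*(b*θ+l)*X*Y - 2*l*(X+Y)*Z) := by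
        by_cases hXY : X = 0 ∧ Y = 0
        · obtain ⟨h1, h2⟩ := hXY
          have hZ : Z ≠ 0 := by rcases hex with h | h | h <;> simp_all
          have : 0 < Z ^ 2 := by positivity
          rw [h1, h2]; nlinarith [mul_pos (mul_pos hbl2 hbl2) this]
        · have hXY2 : 0 < X ^ 2 + Y ^ 2 := by
            rcases not_and_or.mp hXY with h | h <;> positivity
          nlinarith [sq_nonneg ((b+l)*Z - l*(X+Y)),
            mul_nonneg (mul_nonneg hb.le (by nlinarith : (0:ℝ) ≤ θ*(b+l)+l)) (sq_nonneg (X+Y)),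
            mul_pos (mul_pos hb (by nlinarith : (0:ℝ) < (1-θ)*(b+l))) hXY2]
      nlinarith [key, mul_pos hbl2 hbl2]
end

section
/- The symmetric 3×3 matrix 2·[[-t1, -t2, (3/2)λ],[-t2, -t1, (3/2)λ],[(3/2)λ, (3/2)λ, -2t1 - αs]], with t1 = b + λ, t2 = bθ + λ, has eigenvalues e1 = -2b(1-θ), and e± = -αs - bθ - 3b - 4λ ± ψ where ψ = √((αs)² - 2αs·bθ + 2αs·b + b²θ² - 2b²θ + b² + 18λ²); moreover if b ≥ λ > 0, 0 ≤ θ < 1, s > 0 and 0 ≤ α ≤ 1, all eigenvalues are negative. -/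
open Matrix Polynomial

/-- The symmetric 3×3 matrix
`2 • ![![-t1,-t2,(3/2)λ],![-t2,-t1,(3/2)λ],![(3/2)λ,(3/2)λ,-2t1-αs]]`, with `t1 = b+λ`,
`t2 = bθ+λ`, has eigenvalues `e1 = -2b(1-θ)` and `e± = -αs - bθ - 3b - 4λ ± ψ` where
`ψ = √((αs)² - 2αs·bθ + 2αs·b + b²θ² - 2b²θ + b² + 18λ²)`; moreover under the
stated hypotheses all eigenvalues are negative. -/
theorem stmt4 (b l θ s α : ℝ) (hbl : b ≥ l) (hl : 0 < l) (hθ0 : 0 ≤ θ) (hθ1 : θ < 1)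
    (hs : 0 < s) (hα0 : 0 ≤ α) (hα1 : α ≤ 1)
    (t1 t2 ψ : ℝ) (ht1 : t1 = b + l) (ht2 : t2 = b * θ + l)
    (hψ : ψ = Real.sqrt ((α * s) ^ 2 - 2 * (α * s) * (b * θ) + 2 * (α * s) * b
        + b ^ 2 * θ ^ 2 - 2 * b ^ 2 * θ + b ^ 2 + 18 * l ^ 2)) :
    ((2 : ℝ) • !![-t1, -t2, (3 / 2) * l;
                  -t2, -t1, (3 / 2) * l;
                  (3 / 2) * l, (3 / 2) * l, -2 * t1 - α * s]).charpoly =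
      (X - C (-2 * b * (1 - θ))) *
        (X - C (-(α * s) - b * θ - 3 * b - 4 * l - ψ)) *
        (X - C (-(α * s) - b * θ - 3 * b - 4 * l + ψ)) ∧
    (-2 * b * (1 - θ) < 0) ∧
    (-(α * s) - b * θ - 3 * b - 4 * l - ψ < 0) ∧
    (-(α * s) - b * θ - 3 * b - 4 * l + ψ < 0) := by
  have hb : 0 < b := lt_of_lt_of_le hl hbl
  have hψ2 : ψ ^ 2 = (α * s - b * θ + b) ^ 2 + 18 * l ^ 2 := by
    rw [hψ, show (α * s) ^ 2 - 2 * (α * s) * (b * θ) + 2 * (α * s) * b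
        + b ^ 2 * θ ^ 2 - 2 * b ^ 2 * θ + b ^ 2 + 18 * l ^ 2
        = (α * s - b * θ + b) ^ 2 + 18 * l ^ 2 from by ring,
      Real.sq_sqrt (by positivity)]
  have hψ0 : 0 ≤ ψ := hψ ▸ Real.sqrt_nonneg _
  have hαs : 0 ≤ α * s := mul_nonneg hα0 hs.le
  have hbθ : 0 ≤ b * θ := mul_nonneg hb.le hθ0
  refine ⟨?_, by nlinarith, by nlinarith, ?_⟩
  · have hM : ((2 : ℝ) • !![-t1, -t2, (3 / 2) * l;
                    -t2, -t1, (3 / 2) * l;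
                    (3 / 2) * l, (3 / 2) * l, -2 * t1 - α * s])
        = !![-2*t1, -2*t2, 3 * l;
             -2*t2, -2*t1, 3 * l;
             3 * l, 3 * l, -4 * t1 - 2*(α * s)] := by
      ext i j; fin_cases i <;> fin_cases j <;> simp <;> ring
    have h2 : (C ψ) ^ 2 = C ((α * s - b * θ + b) ^ 2 + 18 * l ^ 2) := by
      rw [← map_pow, hψ2]
    subst ht1 ht2
    rw [hM, Matrix.charpoly, Matrix.det_fin_three]
    simp [charmatrix_apply_eq, charmatrix_apply_ne]
    simp only [C_mul, C_add, C_neg, C_sub, C_pow, map_ofNat, C_1] at h2 ⊢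
    linear_combination (X - (-(2 * C b) * (1 - C θ))) * h2
  · have hlt : ψ ^ 2 < (α * s + b * θ + 3 * b + 4 * l) ^ 2 := by nlinarith
    nlinarith [hlt, hψ0]
end

section
/- Consider the first-order system of Theorem 1, sub case 1 (equations (22a)-(22d)) with all base demands, sensitivities and costs as parameters satisfying b(1-θ) > 0 and (b+λ)b(1+θ)+2bλ ≠ 0 and 2b+(1-α)b_s ≠ 0. Then the system of four linear equations in (p₁ⁱ¹, p₁ⁱ², p₁ᵇ, p₂ᵇ) has a unique solution, given by the closed-form expressions (14a)-(14d) of Theorem 1. -/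
set_option maxHeartbeats 1000000

/-- The first-order system of Theorem 1 (sub case 1) in `(p₁ⁱ¹, p₁ⁱ², p₁ᵇ, p₂ᵇ)` has a
unique solution, given by the closed-form expressions (14a)–(14d) of Theorem 1. -/
theorem stmt14 (b l θ α bs c1 c2 c a1 a2 ab aljb aqjb as : ℝ)
    (hbl : b ≥ l) (hl : 0 < l) (hθ0 : 0 ≤ θ) (hθ1 : θ < 1)
    (hα0 : 0 ≤ α) (hα1 : α ≤ 1) (hbs : 0 < bs) (hc : c = c1 + c2)
    (h1 : 0 < b * (1 - θ)) (h2 : (b + l) * b * (1 + θ) + 2 * b * l ≠ 0)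
    (h3 : 2 * b + (1 - α) * bs ≠ 0) :
    ∀ x1 x2 x3 x4 : ℝ,
      ((a1 - b * x1 - b * θ * x2 + l * (x3 - x1 - x2))
          - (x1 - c1) * (b + l) - (x2 - c2) * (b * θ + l)
          + (x3 - c) * l + (x4 - c) * l = 0 ∧
        (a2 - b * θ * x1 - b * x2 + l * (x3 - x1 - x2))
          - (x1 - c1) * (b * θ + l) - (x2 - c2) * (b + l)
          + (x3 - c) * l + (x4 - c) * l = 0 ∧
        (x1 - c1) * l + (x2 - c2) * l + (ab - b * x3 + l * (x1 + x2 - x3))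
          - (x3 - c) * (b + l) = 0 ∧
        (aljb - b * x4) + (aqjb - b * x4) + (1 - α) * (as - bs * x4)
          - (x4 - c) * (2 * b + (1 - α) * bs) = 0)
      ↔
      (x4 = (1 / 2) * ((aljb + aqjb + (1 - α) * as) / (2 * b + (1 - α) * bs) + c) ∧
        x3 = (1 / 2) * (((a1 + a2) * l + (b * (1 + θ) + 2 * l) * ab) /
              ((b + l) * b * (1 + θ) + 2 * b * l)
            + ((aljb + aqjb + (1 - α) * as) / (2 * b + (1 - α) * bs) - c) * l ^ 2 /
              ((b + l) * b * (1 + θ) + 2 * b * l) + c) ∧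
        x1 = (1 / 4) * (a1 - a2) / (b * (1 - θ)) - ab / (4 * l)
            + (2 * x3 - c) * (b + l) / (4 * l) + c1 / 2 ∧
        x2 = -(1 / 4) * (a1 - a2) / (b * (1 - θ)) - ab / (4 * l)
            + (2 * x3 - c) * (b + l) / (4 * l) + c2 / 2) := by
  intro x1 x2 x3 x4
  have hbt : b * (1 - θ) ≠ 0 := ne_of_gt h1
  have hl0 : l ≠ 0 := ne_of_gt hl
  have hb0 : b ≠ 0 := by
    intro hb; rw [hb] at h1; simp at h1
  have hθ' : 1 - θ ≠ 0 := ne_of_gt (by linarith)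
  have h2' : (b + l) * (1 + θ) + 2 * l ≠ 0 := ne_of_gt (by nlinarith)
  constructor
  · rintro ⟨e1, e2, e3, e4⟩
    have k4 : 2 * (2 * b + (1 - α) * bs) * x4
        = (aljb + aqjb + (1 - α) * as) + c * (2 * b + (1 - α) * bs) := by
      linear_combination -e4
    have k3 : 2 * ((b + l) * b * (1 + θ) + 2 * b * l) * (2 * b + (1 - α) * bs) * x3
        = ((a1 + a2) * l + (b * (1 + θ) + 2 * l) * ab) * (2 * b + (1 - α) * bs)
          + l ^ 2 * ((aljb + aqjb + (1 - α) * as) - c * (2 * b + (1 - α) * bs))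
          + ((b + l) * b * (1 + θ) + 2 * b * l) * c * (2 * b + (1 - α) * bs) := by
      linear_combination l ^ 2 * k4 - (2 * b + (1 - α) * bs) * l * e1
        - (2 * b + (1 - α) * bs) * l * e2
        - (2 * b + (1 - α) * bs) * (b * (1 + θ) + 2 * l) * e3
    have k1 : 2 * (b * (1 - θ)) * (x1 - x2) = (a1 - a2) + b * (1 - θ) * (c1 - c2) := by
      linear_combination e2 - e1
    have k2 : 2 * l * (x1 + x2) = l * c - ab + (b + l) * (2 * x3 - c) := by
      linear_combination e3 - l * hc
    refine ⟨?_, ?_, ?_, ?_⟩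
    · field_simp
      linear_combination k4
    · field_simp
      have hD : (1 + θ) * (b + l) + 2 * l ≠ 0 := ne_of_gt (by nlinarith)
      rw [div_add' _ _ _ hD, eq_div_iff hD]
      linear_combination k3
    · field_simp
      linear_combination 2 * l * k1 + 2 * (b * (1 - θ)) * k2
        + 2 * (b * (1 - θ)) * l * hc
    · field_simp
      linear_combination -(2 * l) * k1 + 2 * (b * (1 - θ)) * k2
        + 2 * (b * (1 - θ)) * l * hc
  · rintro ⟨hx4, hx3, hx1, hx2⟩
    have k4 : 2 * (2 * b + (1 - α) * bs) * x4
        = (aljb + aqjb + (1 - α) * as) + c * (2 * b + (1 - α) * bs) := by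
      rw [hx4]; field_simp
    have k3 : 2 * ((b + l) * b * (1 + θ) + 2 * b * l) * (2 * b + (1 - α) * bs) * x3
        = ((a1 + a2) * l + (b * (1 + θ) + 2 * l) * ab) * (2 * b + (1 - α) * bs)
          + l ^ 2 * ((aljb + aqjb + (1 - α) * as) - c * (2 * b + (1 - α) * bs))
          + ((b + l) * b * (1 + θ) + 2 * b * l) * c * (2 * b + (1 - α) * bs) := by
      rw [hx3]; field_simp
    have k1 : 2 * (b * (1 - θ)) * (x1 - x2) = (a1 - a2) + b * (1 - θ) * (c1 - c2) := by
      rw [hx1, hx2]; field_simp; ring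
    have k2 : 2 * l * (x1 + x2) = l * c - ab + (b + l) * (2 * x3 - c) := by
      rw [hx1, hx2, hc]; field_simp; ring
    have hsum2 : (2 * b + (1 - α) * bs) * l *
        (((a1 - b * x1 - b * θ * x2 + l * (x3 - x1 - x2))
          - (x1 - c1) * (b + l) - (x2 - c2) * (b * θ + l)
          + (x3 - c) * l + (x4 - c) * l)
        + ((a2 - b * θ * x1 - b * x2 + l * (x3 - x1 - x2))
          - (x1 - c1) * (b * θ + l) - (x2 - c2) * (b + l)
          + (x3 - c) * l + (x4 - c) * l)) = 0 := by
      linear_combination l ^ 2 * k4 - k3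
        - (2 * b + (1 - α) * bs) * (b * (1 + θ) + 2 * l) * k2
        - (2 * b + (1 - α) * bs) * (b * (1 + θ) + 2 * l) * l * hc
    have hsum : ((a1 - b * x1 - b * θ * x2 + l * (x3 - x1 - x2))
          - (x1 - c1) * (b + l) - (x2 - c2) * (b * θ + l)
          + (x3 - c) * l + (x4 - c) * l)
        + ((a2 - b * θ * x1 - b * x2 + l * (x3 - x1 - x2))
          - (x1 - c1) * (b * θ + l) - (x2 - c2) * (b + l)
          + (x3 - c) * l + (x4 - c) * l) = 0 := by
      apply mul_left_cancel₀ (mul_ne_zero h3 hl0)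
      rw [mul_zero]; linear_combination hsum2
    have hdiff : ((a1 - b * x1 - b * θ * x2 + l * (x3 - x1 - x2))
          - (x1 - c1) * (b + l) - (x2 - c2) * (b * θ + l)
          + (x3 - c) * l + (x4 - c) * l)
        - ((a2 - b * θ * x1 - b * x2 + l * (x3 - x1 - x2))
          - (x1 - c1) * (b * θ + l) - (x2 - c2) * (b + l)
          + (x3 - c) * l + (x4 - c) * l) = 0 := by
      linear_combination -k1
    refine ⟨?_, ?_, ?_, ?_⟩
    · linear_combination (hsum + hdiff) / 2
    · linear_combination (hsum - hdiff) / 2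
    · linear_combination k2 + l * hc
    · linear_combination -k4
end
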